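/- For every real number p ≥ 2 and all vectors ξ, η in ℝ^m, ⟨|ξ|^{p-2}ξ − |η|^{p-2}η, ξ − η⟩ ≥ 2^{1−p} |ξ − η|^p. -/

import Mathlib

private lemma rpow_split (a p : ℝ) (ha : 0 ≤ a) (hp : 2 ≤ p) :
    a ^ p = a ^ (p - 2) * a ^ 2 := by
  rcases eq_or_lt_of_le ha with h | h
  · rcases eq_or_lt_of_le hp with hp2 | hp2
    · subst h; rw [← hp2]; norm_num
    · subst h
      rw [Real.zero_rpow (by linarith), Real.zero_rpow (by linarith)]
      ring
  · rw [← Real.rpow_natCast a 2]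
    rw [← Real.rpow_add h]
    norm_num

private lemma key_ineq (p : ℝ) (hp : 2 ≤ p) (a b c t : ℝ)
    (ha : 0 ≤ a) (hb : 0 ≤ b) (hc : 0 ≤ c) (hcab : c ≤ a + b)
    (hc2 : c ^ 2 = a ^ 2 - 2 * t + b ^ 2) :
    (2 : ℝ) ^ (1 - p) * c ^ p ≤
      a ^ (p - 2) * a ^ 2 - (a ^ (p - 2) + b ^ (p - 2)) * t + b ^ (p - 2) * b ^ 2 := by
  have hq : (0 : ℝ) ≤ p - 2 := by linarith
  set x := a ^ (p - 2) with hx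
  set y := b ^ (p - 2) with hy
  have hxnn : 0 ≤ x := Real.rpow_nonneg ha _
  have hynn : 0 ≤ y := Real.rpow_nonneg hb _
  -- step: c^(p-2) ≤ 2^(p-2) * (x + y)
  have h1 : c ^ (p - 2) ≤ 2 ^ (p - 2) * (x + y) := by
    have hcab' : c ^ (p - 2) ≤ (a + b) ^ (p - 2) :=
      Real.rpow_le_rpow hc hcab hq
    have h2' : (a + b) ^ (p - 2) ≤ 2 ^ (p - 2) * (x + y) := by
      rcases le_total a b with hab | hab
      · have : (a + b) ^ (p - 2) ≤ (2 * b) ^ (p - 2) :=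
          Real.rpow_le_rpow (by linarith) (by linarith) hq
        calc (a + b) ^ (p - 2) ≤ (2 * b) ^ (p - 2) := this
          _ = 2 ^ (p - 2) * y := by
              rw [Real.mul_rpow (by norm_num) hb]
          _ ≤ 2 ^ (p - 2) * (x + y) := by
              have h2p : (0:ℝ) ≤ (2:ℝ) ^ (p - 2) := Real.rpow_nonneg (by norm_num) _
              nlinarith
      · have : (a + b) ^ (p - 2) ≤ (2 * a) ^ (p - 2) :=
          Real.rpow_le_rpow (by linarith) (by linarith) hq
        calc (a + b) ^ (p - 2) ≤ (2 * a) ^ (p - 2) := this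
          _ = 2 ^ (p - 2) * x := by
              rw [Real.mul_rpow (by norm_num) ha]
          _ ≤ 2 ^ (p - 2) * (x + y) := by
              have h2p : (0:ℝ) ≤ (2:ℝ) ^ (p - 2) := Real.rpow_nonneg (by norm_num) _
              nlinarith
    linarith
  -- step: (x - y) * (a^2 - b^2) ≥ 0
  have h2 : 0 ≤ (x - y) * (a ^ 2 - b ^ 2) := by
    rcases le_total a b with hab | hab
    · have h1' : x ≤ y := Real.rpow_le_rpow ha hab hq
      have h2' : a ^ 2 ≤ b ^ 2 := by nlinarith
      nlinarith
    · have h1' : y ≤ x := Real.rpow_le_rpow hb hab hq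
      have h2' : b ^ 2 ≤ a ^ 2 := by nlinarith
      nlinarith
  -- step: 2^(1-p) * 2^(p-2) = 1/2
  have h2pow : (2 : ℝ) ^ (1 - p) * 2 ^ (p - 2) = 1 / 2 := by
    rw [← Real.rpow_add (by norm_num)]
    have : (1 - p) + (p - 2) = -1 := by ring
    rw [this, Real.rpow_neg_one]
    norm_num
  have hLnn : (0:ℝ) ≤ (2:ℝ) ^ (1 - p) := Real.rpow_nonneg (by norm_num) _
  have hsplit : c ^ p = c ^ (p - 2) * c ^ 2 := rpow_split c p hc hp
  have hhalf : (1 : ℝ) / 2 * (x + y) * c ^ 2 ≤ x * a ^ 2 - (x + y) * t + y * b ^ 2 := by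
    rw [hc2]; nlinarith
  calc (2 : ℝ) ^ (1 - p) * c ^ p
      = 2 ^ (1 - p) * (c ^ (p - 2) * c ^ 2) := by rw [hsplit]
    _ ≤ 2 ^ (1 - p) * (2 ^ (p - 2) * (x + y) * c ^ 2) := by
        have := mul_le_mul_of_nonneg_right h1 (sq_nonneg c)
        nlinarith
    _ = (2 ^ (1 - p) * 2 ^ (p - 2)) * ((x + y) * c ^ 2) := by ring
    _ = 1 / 2 * (x + y) * c ^ 2 := by rw [h2pow]; ring
    _ ≤ x * a ^ 2 - (x + y) * t + y * b ^ 2 := hhalf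

theorem stmt_0 (m : ℕ) (p : ℝ) (hp : 2 ≤ p)
    (ξ η : EuclideanSpace ℝ (Fin m)) :
    (inner ℝ ((‖ξ‖ ^ (p - 2)) • ξ - (‖η‖ ^ (p - 2)) • η) (ξ - η) : ℝ) ≥
      (2 : ℝ) ^ (1 - p) * ‖ξ - η‖ ^ p := by
  have hexp : (inner ℝ ((‖ξ‖ ^ (p - 2)) • ξ - (‖η‖ ^ (p - 2)) • η) (ξ - η) : ℝ)
      = ‖ξ‖ ^ (p - 2) * ‖ξ‖ ^ 2 - (‖ξ‖ ^ (p - 2) + ‖η‖ ^ (p - 2)) * (inner ℝ ξ η : ℝ)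
        + ‖η‖ ^ (p - 2) * ‖η‖ ^ 2 := by
    simp only [inner_sub_left, inner_sub_right, real_inner_smul_left,
      real_inner_self_eq_norm_sq, real_inner_comm η ξ]
    ring
  have hc2 : ‖ξ - η‖ ^ 2 = ‖ξ‖ ^ 2 - 2 * (inner ℝ ξ η : ℝ) + ‖η‖ ^ 2 :=
    norm_sub_sq_real ξ η
  have hcab : ‖ξ - η‖ ≤ ‖ξ‖ + ‖η‖ := norm_sub_le ξ η
  have := key_ineq p hp ‖ξ‖ ‖η‖ ‖ξ - η‖ (inner ℝ ξ η : ℝ)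
    (norm_nonneg _) (norm_nonneg _) (norm_nonneg _) hcab hc2
  rw [ge_iff_le, hexp]
  exact this
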